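/- Let G be a linearly ordered commutative group and X a set. Let f : ι → (X → G) and g : κ → (X → G) be families of functions indexed by finite nonempty types, and write F(x) := max_i f_i(x) and H(x) := max_j g_j(x). Then the corner locus of the combined family (indexed by the disjoint union ι ⊕ κ) decomposes as: Cor(f ⊕ g) = {x | F(x) = H(x)} ∪ ( Cor(f) ∩ {x | H(x) ≤ F(x)} ) ∪ ( Cor(g) ∩ {x | F(x) ≤ H(x)} ). -/

import Mathlib

/-- `x` is a corner root of the family `f` if two distinct members agree at `x` and
dominate all other members there. -/
def IsCornerRoot {X A ι : Type*} [LinearOrder A] (f : ι → X → A) (x : X) : Prop :=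
  ∃ i j : ι, i ≠ j ∧ f i x = f j x ∧ ∀ l : ι, f l x ≤ f i x

/-- The pointwise maximum of a finite nonempty family of functions. -/
def famSup {A X ι : Type*} [SemilatticeSup A] [Fintype ι] [Nonempty ι]
    (f : ι → X → A) (x : X) : A :=
  Finset.univ.sup' Finset.univ_nonempty fun i => f i x

lemma le_famSup {A X ι : Type*} [SemilatticeSup A] [Fintype ι] [Nonempty ι]
    (f : ι → X → A) (x : X) (i : ι) : f i x ≤ famSup f x := by
  unfold famSup; exact Finset.le_sup' (fun i => f i x) (Finset.mem_univ i)

lemma exists_famSup {A X ι : Type*} [LinearOrder A] [Fintype ι] [Nonempty ι]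
    (f : ι → X → A) (x : X) : ∃ i, famSup f x = f i x := by
  unfold famSup
  obtain ⟨i, _, hi⟩ := Finset.exists_mem_eq_sup' (Finset.univ_nonempty (α := ι))
    (fun i => f i x)
  exact ⟨i, hi⟩

lemma famSup_eq_of_dom {A X ι : Type*} [LinearOrder A] [Fintype ι] [Nonempty ι]
    (f : ι → X → A) (x : X) (i : ι) (h : ∀ l, f l x ≤ f i x) : famSup f x = f i x := by
  refine le_antisymm ?_ (le_famSup f x i)
  unfold famSup; exact Finset.sup'_le _ _ fun l _ => h l

/-- Decomposition of the corner locus of the combined family (numerator `f` and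
denominator `g` of a rational function): it is the skeleton `{F = H}` together with the
corner roots of `f` where `H ≤ F` and the corner roots of `g` where `F ≤ H`. -/
theorem corner_locus_sum_decomposition {A X : Type*} [CommGroup A] [LinearOrder A] [IsOrderedMonoid A]
    {ι κ : Type*} [Fintype ι] [Nonempty ι] [Fintype κ] [Nonempty κ]
    (f : ι → X → A) (g : κ → X → A) :
    {x : X | IsCornerRoot (Sum.elim f g) x}
      = {x : X | famSup f x = famSup g x}
        ∪ ({x : X | IsCornerRoot f x} ∩ {x : X | famSup g x ≤ famSup f x})
        ∪ ({x : X | IsCornerRoot g x} ∩ {x : X | famSup f x ≤ famSup g x}) := by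
  ext x
  simp only [Set.mem_setOf_eq, Set.mem_union, Set.mem_inter_iff]
  constructor
  · rintro ⟨i, j, hij, heq, hdom⟩
    match i, j with
    | Sum.inl i, Sum.inl j =>
      refine Or.inl (Or.inr ⟨⟨i, j, fun h => hij (by rw [h]), heq, fun l => hdom (Sum.inl l)⟩, ?_⟩)
      have hF : famSup f x = f i x := famSup_eq_of_dom f x i fun l => hdom (Sum.inl l)
      rw [hF]
      unfold famSup
      exact Finset.sup'_le _ _ fun l _ => hdom (Sum.inr l)
    | Sum.inr i, Sum.inr j =>
      refine Or.inr ⟨⟨i, j, fun h => hij (by rw [h]), heq, fun l => hdom (Sum.inr l)⟩, ?_⟩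
      have hG : famSup g x = g i x := famSup_eq_of_dom g x i fun l => hdom (Sum.inr l)
      rw [hG]
      unfold famSup
      exact Finset.sup'_le _ _ fun l _ => hdom (Sum.inl l)
    | Sum.inl i, Sum.inr j =>
      refine Or.inl (Or.inl ?_)
      have hF : famSup f x = f i x := famSup_eq_of_dom f x i fun l => hdom (Sum.inl l)
      have hG : famSup g x = g j x :=
        famSup_eq_of_dom g x j fun l => le_of_le_of_eq (hdom (Sum.inr l)) heq
      rw [hF, hG]; exact heq
    | Sum.inr i, Sum.inl j =>
      refine Or.inl (Or.inl ?_)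
      have hG : famSup g x = g i x := famSup_eq_of_dom g x i fun l => hdom (Sum.inr l)
      have hF : famSup f x = f j x :=
        famSup_eq_of_dom f x j fun l => le_of_le_of_eq (hdom (Sum.inl l)) heq
      rw [hF, hG]; exact heq.symm
  · rintro (h | ⟨⟨i, j, hij, heq, hdom⟩, hle⟩)
    · rcases h with h | ⟨⟨i, j, hij, heq, hdom⟩, hle⟩
      · obtain ⟨i, hi⟩ := exists_famSup f x
        obtain ⟨j, hj⟩ := exists_famSup g x
        refine ⟨Sum.inl i, Sum.inr j, Sum.inl_ne_inr, by simpa using hi ▸ hj ▸ h, ?_⟩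
        rintro (l | l)
        · simpa using hi ▸ le_famSup f x l
        · simpa using hi ▸ (h ▸ hj ▸ le_famSup g x l : g l x ≤ famSup f x)
      · refine ⟨Sum.inl i, Sum.inl j, fun h => hij (Sum.inl.inj h), heq, ?_⟩
        rintro (l | l)
        · exact hdom l
        · have hF : famSup f x = f i x := famSup_eq_of_dom f x i hdom
          simpa using (le_famSup g x l).trans (hle.trans_eq hF)
    · refine ⟨Sum.inr i, Sum.inr j, fun h => hij (Sum.inr.inj h), heq, ?_⟩
      rintro (l | l)
      · have hG : famSup g x = g i x := famSup_eq_of_dom g x i hdom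
        simpa using (le_famSup f x l).trans (hle.trans_eq hG)
      · exact hdom l
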